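/- Status injective trees are status unique in trees: if T is a finite tree all of whose vertices have pairwise distinct statuses, and T' is a finite tree whose status sequence (multiset of statuses) equals that of T, then T' is isomorphic to T. -/

import Mathlib

/-- The status (transmission index) of a vertex: the sum of distances to all vertices. -/
noncomputable def SimpleGraph.status {V : Type*} [Fintype V] (G : SimpleGraph V) (v : V) : ℕ :=
  ∑ u : V, G.dist v u

/-- The status sequence of a finite graph: the multiset of statuses of its vertices. -/
noncomputable def SimpleGraph.statusSequence {V : Type*} [Fintype V] (G : SimpleGraph V) :
    Multiset ℕ :=
  Finset.univ.val.map G.status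

namespace StatusUnique

open SimpleGraph Finset

variable {V : Type*} {G : SimpleGraph V}

lemma path_length (hG : G.IsTree) {a b : V} {p : G.Walk a b} (hp : p.IsPath) :
    p.length = G.dist a b := by
  obtain ⟨q, hq, hql⟩ := hG.isConnected.exists_path_of_dist a b
  rw [(hG.existsUnique_path a b).unique hp hq, hql]

lemma gate [DecidableEq V] (hG : G.IsTree) {x v : V} (hxv : x ≠ v) :
    ∃ u, G.Adj u v ∧ G.dist x u + 1 = G.dist x v ∧
      ∀ u', G.Adj u' v → G.dist x u' + 1 = G.dist x v → u' = u := by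
  obtain ⟨P, hP, hPl⟩ := hG.isConnected.exists_path_of_dist x v
  obtain ⟨u, h, q, hPr⟩ := Walk.exists_eq_cons_of_ne (Ne.symm hxv) P.reverse
  have hrp : P.reverse.IsPath := hP.reverse
  rw [hPr, Walk.cons_isPath_iff] at hrp
  obtain ⟨hq, hvq⟩ := hrp
  have hlen : q.length + 1 = P.length := by
    have h1 := congrArg Walk.length hPr
    simp only [Walk.length_reverse, Walk.length_cons] at h1
    omega
  have hdxu : G.dist x u = q.length := by
    have h2 := path_length hG hq.reverse
    simpa [Walk.length_reverse] using h2.symm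
  refine ⟨u, h.symm, by omega, ?_⟩
  intro u' hu' hd'
  have hu'v : u' ≠ v := hu'.ne
  have hu'P : u' ∈ P.support := by
    by_contra hns
    have hQ : (P.concat hu'.symm).IsPath := by
      rw [Walk.isPath_def, Walk.support_concat]
      simp [List.nodup_append, hP.support_nodup, List.disjoint_singleton, hns]
      exact fun a ha e => hns (e ▸ ha)
    have h3 := path_length hG hQ
    rw [Walk.length_concat] at h3
    omega
  have hu'r : u' ∈ q.support := by
    have h4 : u' ∈ P.reverse.support := by
      rw [Walk.support_reverse]; exact List.mem_reverse.mpr hu'P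
    rw [hPr, Walk.support_cons, List.mem_cons] at h4
    rcases h4 with h6 | h6
    · exact absurd h6 hu'v
    · exact h6
  have h1 : (q.takeUntil u' hu'r).length = G.dist u u' := path_length hG (hq.takeUntil hu'r)
  have h2 : (q.dropUntil u' hu'r).length = G.dist u' x := path_length hG (hq.dropUntil hu'r)
  have h3 : (q.takeUntil u' hu'r).length + (q.dropUntil u' hu'r).length = q.length := by
    have h5 := congrArg Walk.length (q.take_spec hu'r)
    rwa [Walk.length_append] at h5
  have h4 : G.dist u' x = G.dist x u' := G.dist_comm
  have h5 : (q.takeUntil u' hu'r).length = 0 := by omega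
  exact (Walk.eq_of_length_eq_zero h5).symm

lemma dichotomy [DecidableEq V] (hG : G.IsTree) {u v : V} (h : G.Adj u v) (x : V) :
    G.dist x u + 1 = G.dist x v ∨ G.dist x v + 1 = G.dist x u := by
  obtain ⟨P, hP, hPl⟩ := hG.isConnected.exists_path_of_dist x v
  by_cases hm : u ∈ P.support
  · left
    have h1 : (P.takeUntil u hm).length = G.dist x u := path_length hG (hP.takeUntil hm)
    have h2 : (P.dropUntil u hm).length = G.dist u v := path_length hG (hP.dropUntil hm)
    have h3 := congrArg Walk.length (P.take_spec hm)
    rw [Walk.length_append] at h3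
    have h4 : G.dist u v = 1 := dist_eq_one_iff_adj.mpr h
    omega
  · right
    have hQ : (P.concat h.symm).IsPath := by
      rw [Walk.isPath_def, Walk.support_concat]
      simp [List.nodup_append, hP.support_nodup, List.disjoint_singleton, hm]
      exact fun a ha e => hm (e ▸ ha)
    have h3 := path_length hG hQ
    rw [Walk.length_concat] at h3
    omega


/-- The set of vertices strictly closer to `u` than to `v`. -/
noncomputable def closer (G : SimpleGraph V) [Fintype V] (u v : V) : Finset V :=
  Finset.univ.filter (fun x => G.dist x u < G.dist x v)

@[simp] lemma mem_closer [Fintype V] {u v x : V} :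
    x ∈ closer G u v ↔ G.dist x u < G.dist x v := by
  simp [closer]

lemma closer_compl [Fintype V] [DecidableEq V] (hG : G.IsTree) {u v : V} (h : G.Adj u v) :
    closer G v u = (closer G u v)ᶜ := by
  ext x
  have := dichotomy hG h x
  simp only [mem_closer, Finset.mem_compl]
  omega

lemma closer_card [Fintype V] [DecidableEq V] (hG : G.IsTree) {u v : V} (h : G.Adj u v) :
    (closer G u v).card + (closer G v u).card = Fintype.card V := by
  rw [closer_compl hG h, Finset.card_add_card_compl]

lemma status_rel [Fintype V] [DecidableEq V] (hG : G.IsTree) {u v : V} (h : G.Adj u v) :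
    G.status v + (closer G v u).card = G.status u + (closer G u v).card := by
  have key : ∀ x : V, x ∈ closer G u v → G.dist x v = G.dist x u + 1 := by
    intro x hx
    have := dichotomy hG h x
    rw [mem_closer] at hx
    omega
  have key2 : ∀ x : V, x ∈ (closer G u v)ᶜ → G.dist x u = G.dist x v + 1 := by
    intro x hx
    have := dichotomy hG h x
    rw [Finset.mem_compl, mem_closer] at hx
    omega
  have hsum : ∀ w : V, G.status w = ∑ x : V, G.dist x w := by
    intro w
    exact Finset.sum_congr rfl fun x _ => G.dist_comm
  have hv : G.status v = (∑ x ∈ closer G u v, G.dist x u + (closer G u v).card)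
      + ∑ x ∈ (closer G u v)ᶜ, G.dist x v := by
    rw [hsum v, ← Finset.sum_add_sum_compl (closer G u v)]
    congr 1
    rw [Finset.sum_congr rfl (fun x hx => key x hx), Finset.sum_add_distrib]
    simp
  have hu : G.status u = ∑ x ∈ closer G u v, G.dist x u
      + (∑ x ∈ (closer G u v)ᶜ, G.dist x v + (closer G u v)ᶜ.card) := by
    rw [hsum u, ← Finset.sum_add_sum_compl (closer G u v)]
    congr 1
    rw [Finset.sum_congr rfl (fun x hx => key2 x hx), Finset.sum_add_distrib]
    simp
  rw [closer_compl hG h, hv, hu]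
  ring

lemma closer_disjoint [Fintype V] [DecidableEq V] (hG : G.IsTree) {u₁ u₂ v : V}
    (h1 : G.Adj u₁ v) (h2 : G.Adj u₂ v) (hne : u₁ ≠ u₂) :
    Disjoint (closer G u₁ v) (closer G u₂ v) := by
  rw [Finset.disjoint_left]
  intro x hx1 hx2
  rw [mem_closer] at hx1 hx2
  have hxv : x ≠ v := by
    rintro rfl
    simp [SimpleGraph.dist_self] at hx1
  obtain ⟨g, hg, hdg, huniq⟩ := gate hG hxv
  have e1 : u₁ = g := by
    refine huniq u₁ h1 ?_
    have := dichotomy hG h1 x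
    omega
  have e2 : u₂ = g := by
    refine huniq u₂ h2 ?_
    have := dichotomy hG h2 x
    omega
  exact hne (e1.trans e2.symm)

lemma closer_subset [Fintype V] [DecidableEq V] (hG : G.IsTree) {c a a' : V}
    (hca : G.Adj c a) (haa' : G.Adj a a') (hne : c ≠ a') :
    closer G c a ⊆ closer G a a' := by
  intro x hx
  by_contra hx'
  have hmem : x ∈ closer G a' a := by
    rw [closer_compl hG haa']
    exact Finset.mem_compl.mpr hx'
  have hd := closer_disjoint hG hca haa'.symm hne
  exact (Finset.disjoint_left.mp hd hx) hmem

lemma descent_aux [Fintype V] [DecidableEq V] (hG : G.IsTree) {a b : V} (p : G.Walk a b) :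
    p.IsPath → ∀ c, G.Adj c a → c ∉ p.support →
      Fintype.card V ≤ 2 * (closer G c a).card → G.status a ≤ G.status b := by
  induction p with
  | nil => intro _ c _ _ _; exact le_rfl
  | @cons a a' b h q ih =>
    intro hp c hca hcs hcard
    rw [Walk.cons_isPath_iff] at hp
    obtain ⟨hq, haq⟩ := hp
    rw [Walk.support_cons, List.mem_cons] at hcs
    push_neg at hcs
    obtain ⟨hcna, hcq⟩ := hcs
    have hca' : c ≠ a' := by
      rintro rfl
      exact hcq q.start_mem_support
    have hsub : closer G c a ⊆ closer G a a' := closer_subset hG hca h hca'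
    have hma : a ∈ closer G a a' := by
      rw [mem_closer, SimpleGraph.dist_self, dist_eq_one_iff_adj.mpr h]
      omega
    have hma' : a ∉ closer G c a := by
      rw [mem_closer, SimpleGraph.dist_self]
      omega
    have hlt : (closer G c a).card < (closer G a a').card := by
      refine Finset.card_lt_card ?_
      rw [Finset.ssubset_iff_of_subset hsub]
      exact ⟨a, hma, hma'⟩
    have hcard' : Fintype.card V ≤ 2 * (closer G a a').card := by omega
    have hstep : G.status a ≤ G.status a' := by
      have hr := status_rel hG h
      have hc := closer_card hG h
      omega
    have : G.status a' ≤ G.status b := ih hq a h haq hcard'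
    omega


lemma exists_parent [Fintype V] [DecidableEq V] (hG : G.IsTree)
    (hSinj : Function.Injective G.status) {m v : V}
    (hm : ∀ x, G.status m ≤ G.status x) (hvm : v ≠ m) :
    ∃ u, G.Adj v u ∧ G.status u < G.status v := by
  obtain ⟨P, hP, hPl⟩ := hG.isConnected.exists_path_of_dist v m
  obtain ⟨u, h, q, rfl⟩ := Walk.exists_eq_cons_of_ne hvm P
  rw [Walk.cons_isPath_iff] at hP
  obtain ⟨hq, hvq⟩ := hP
  by_contra hno
  push_neg at hno
  have hlt : G.status v < G.status u := by
    refine lt_of_le_of_ne (hno u h) ?_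
    intro e
    exact h.ne (hSinj e)
  have hr := status_rel hG h
  have hc := closer_card hG h
  have hinv : Fintype.card V ≤ 2 * (closer G v u).card := by omega
  have hdesc : G.status u ≤ G.status m := descent_aux hG q hq v h hvq hinv
  have hmv : G.status m < G.status v := by
    refine lt_of_le_of_ne (hm v) ?_
    intro e
    exact hvm (hSinj e.symm).symm.symm
  omega

lemma parent_unique [Fintype V] [DecidableEq V] (hG : G.IsTree) {v u₁ u₂ : V}
    (h1 : G.Adj v u₁) (h2 : G.Adj v u₂)
    (hs1 : G.status u₁ < G.status v) (hs2 : G.status u₂ < G.status v) : u₁ = u₂ := by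
  by_contra hne
  have hd := closer_disjoint hG h1.symm h2.symm hne
  have hr1 := status_rel hG h1.symm
  have hc1 := closer_card hG h1.symm
  have hr2 := status_rel hG h2.symm
  have hc2 := closer_card hG h2.symm
  have hun : (closer G u₁ v ∪ closer G u₂ v).card ≤ Fintype.card V := Finset.card_le_univ _
  rw [Finset.card_union_of_disjoint hd] at hun
  omega

lemma closer_decomp [Fintype V] [DecidableEq V] [DecidableRel G.Adj] (hG : G.IsTree)
    {v u : V} (h : G.Adj v u) :
    closer G v u = insert v (((G.neighborFinset v).erase u).biUnion fun c => closer G c v) := by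
  ext x
  simp only [Finset.mem_insert, Finset.mem_biUnion, Finset.mem_erase, mem_neighborFinset]
  constructor
  · intro hx
    by_cases hxv : x = v
    · exact Or.inl hxv
    · right
      rw [mem_closer] at hx
      obtain ⟨g, hg, hdg, _⟩ := gate hG hxv
      refine ⟨g, ⟨?_, hg.symm⟩, ?_⟩
      · rintro rfl
        omega
      · rw [mem_closer]; omega
  · rintro (rfl | ⟨c, ⟨hcu, hvc⟩, hxc⟩)
    · rw [mem_closer, SimpleGraph.dist_self, dist_eq_one_iff_adj.mpr h]
      omega
    · exact closer_subset hG hvc.symm h hcu hxc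

lemma closer_card_rec [Fintype V] [DecidableEq V] [DecidableRel G.Adj] (hG : G.IsTree)
    {v u : V} (h : G.Adj v u) :
    (closer G v u).card = 1 + ∑ c ∈ (G.neighborFinset v).erase u, (closer G c v).card := by
  rw [closer_decomp hG h, Finset.card_insert_of_notMem, Finset.card_biUnion]
  · omega
  · intro c₁ hc₁ c₂ hc₂ hne
    rw [Finset.mem_coe, Finset.mem_erase, mem_neighborFinset] at hc₁ hc₂
    exact closer_disjoint hG hc₁.2.symm hc₂.2.symm hne
  · simp [SimpleGraph.dist_self]


lemma tree_data [Fintype V] [DecidableEq V] [DecidableRel G.Adj] (hG : G.IsTree)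
    (hinj : Function.Injective G.status) {m : V} (hm : ∀ x, G.status m ≤ G.status x) :
    ∃ (p : V → V) (w : V → ℕ),
      (∀ v, v ≠ m → G.status (p v) < G.status v) ∧
      (∀ v, v ≠ m → (G.status v : ℤ) =
        G.status (p v) + (Fintype.card V : ℤ) - 2 * w v) ∧
      (∀ v, v ≠ m → w v = 1 + ∑ u ∈ Finset.univ.filter (fun u => u ≠ m ∧ p u = v), w u) ∧
      (∀ x y, G.Adj x y ↔ ((x ≠ m ∧ p x = y) ∨ (y ≠ m ∧ p y = x))) := by
  have hex : ∀ v : V, ∃ u, v ≠ m → (G.Adj v u ∧ G.status u < G.status v) := by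
    intro v
    by_cases hv : v = m
    · exact ⟨v, fun h => absurd hv h⟩
    · obtain ⟨u, hu⟩ := exists_parent hG hinj hm hv
      exact ⟨u, fun _ => hu⟩
  choose p hp using hex
  have hpadj : ∀ v, v ≠ m → G.Adj v (p v) := fun v hv => (hp v hv).1
  have hplt : ∀ v, v ≠ m → G.status (p v) < G.status v := fun v hv => (hp v hv).2
  have hadj : ∀ x y, G.Adj x y ↔ ((x ≠ m ∧ p x = y) ∨ (y ≠ m ∧ p y = x)) := by
    intro x y
    constructor
    · intro hxy
      have hsne : G.status x ≠ G.status y := fun e => hxy.ne (hinj e)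
      rcases Nat.lt_or_ge (G.status y) (G.status x) with hlt | hge
      · have hxm : x ≠ m := by
          rintro rfl
          exact absurd (hm y) (by omega)
        exact Or.inl ⟨hxm, parent_unique hG (hpadj x hxm) hxy (hplt x hxm) hlt⟩
      · have hsne' : G.status x ≠ G.status y := hsne
        have hlt' : G.status x < G.status y := lt_of_le_of_ne hge hsne'
        have hym : y ≠ m := by
          rintro rfl
          exact absurd (hm x) (by omega)
        exact Or.inr ⟨hym,
          parent_unique hG (hpadj y hym) hxy.symm (hplt y hym) hlt'⟩
    · rintro (⟨hxm, rfl⟩ | ⟨hym, rfl⟩)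
      · exact hpadj x hxm
      · exact (hpadj y hym).symm
  refine ⟨p, fun v => (closer G v (p v)).card, hplt, ?_, ?_, hadj⟩
  · intro v hv
    beta_reduce
    have hr := status_rel hG (hpadj v hv)
    have hc := closer_card hG (hpadj v hv)
    omega
  · intro v hv
    have heq : (G.neighborFinset v).erase (p v)
        = Finset.univ.filter (fun u => u ≠ m ∧ p u = v) := by
      ext u
      simp only [Finset.mem_erase, mem_neighborFinset, Finset.mem_filter, Finset.mem_univ,
        true_and]
      constructor
      · rintro ⟨hupv, hadjvu⟩
        have hsu : G.status v ≠ G.status u := fun e => hadjvu.ne (hinj e)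
        have hvltu : G.status v < G.status u := by
          rcases Nat.lt_or_ge (G.status u) (G.status v) with hlt | hge
          · exact absurd (parent_unique hG hadjvu (hpadj v hv) hlt (hplt v hv)) hupv
          · exact lt_of_le_of_ne hge hsu
        have hum : u ≠ m := by
          rintro rfl
          exact absurd (hm v) (by omega)
        exact ⟨hum, parent_unique hG (hpadj u hum) hadjvu.symm (hplt u hum) hvltu⟩
      · rintro ⟨hum, rfl⟩
        refine ⟨?_, (hpadj u hum).symm⟩
        intro e
        have h1 := hplt u hum
        have h2 := hplt (p u) hv
        rw [← e] at h2
        omega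
    beta_reduce
    have hrec := closer_card_rec hG (hpadj v hv)
    rw [heq] at hrec
    rw [hrec]
    congr 1
    refine Finset.sum_congr rfl ?_
    intro u hu
    rw [Finset.mem_filter] at hu
    rw [hu.2.2]


lemma reconstruct {α β : Type*} [Fintype α] [Fintype β] [DecidableEq α] [DecidableEq β]
    (n : ℕ) (s : α → ℕ) (s' : β → ℕ) (hs : Function.Injective s)
    (φ : β → α) (hφ : ∀ b, s (φ b) = s' b) (hbij : Function.Bijective φ)
    (m : α) (m' : β) (hm : φ m' = m)
    (p : α → α) (p' : β → β)
    (hp : ∀ a, a ≠ m → s (p a) < s a) (hp' : ∀ b, b ≠ m' → s' (p' b) < s' b)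
    (w : α → ℕ) (w' : β → ℕ)
    (hw : ∀ a, a ≠ m → (s a : ℤ) = s (p a) + (n : ℤ) - 2 * w a)
    (hw' : ∀ b, b ≠ m' → (s' b : ℤ) = s' (p' b) + (n : ℤ) - 2 * w' b)
    (hrec : ∀ a, a ≠ m → w a = 1 + ∑ u ∈ Finset.univ.filter (fun u => u ≠ m ∧ p u = a), w u)
    (hrec' : ∀ b, b ≠ m' →
      w' b = 1 + ∑ u ∈ Finset.univ.filter (fun u => u ≠ m' ∧ p' u = b), w' u) :
    ∀ b, b ≠ m' → φ (p' b) = p (φ b) := by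
  have hs' : Function.Injective s' := by
    intro b₁ b₂ he
    have : φ b₁ = φ b₂ := hs (by rw [hφ, hφ, he])
    exact hbij.1 this
  have hsm : s m = s' m' := by rw [← hm, hφ]
  have hnm : ∀ b : β, b ≠ m' → φ b ≠ m := by
    intro b hb he
    exact hb (hbij.1 (he.trans hm.symm))
  have KEY : ∀ k, ∀ b, (Finset.univ.filter (fun c => s' b < s' c)).card = k → b ≠ m' →
      w' b = w (φ b) ∧ φ (p' b) = p (φ b) := by
    intro k
    induction k using Nat.strong_induction_on with
    | _ k IH =>
      intro b hb hbm
      have ham : φ b ≠ m := hnm b hbm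
      -- IH applies to any c with s' b < s' c
      have hIH : ∀ c, c ≠ m' → s' b < s' c → w' c = w (φ c) ∧ φ (p' c) = p (φ c) := by
        intro c hcm hbc
        have hsub : (Finset.univ.filter (fun d => s' c < s' d))
            ⊂ (Finset.univ.filter (fun d => s' b < s' d)) := by
          rw [Finset.ssubset_iff_of_subset]
          · exact ⟨c, by simp [hbc], by simp⟩
          · intro d hd
            rw [Finset.mem_filter] at hd ⊢
            exact ⟨hd.1, lt_trans hbc hd.2⟩
        have hlt : (Finset.univ.filter (fun d => s' c < s' d)).card < k := by
          rw [← hb]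
          exact Finset.card_lt_card hsub
        exact IH _ hlt c rfl hcm
      -- children sets correspond
      have himg : (Finset.univ.filter (fun c => c ≠ m' ∧ p' c = b)).image φ
          = Finset.univ.filter (fun u => u ≠ m ∧ p u = φ b) := by
        ext u
        simp only [Finset.mem_image, Finset.mem_filter, Finset.mem_univ, true_and]
        constructor
        · rintro ⟨c, ⟨hcm, hpc⟩, rfl⟩
          have hbc : s' b < s' c := by rw [← hpc]; exact hp' c hcm
          obtain ⟨_, h2⟩ := hIH c hcm hbc
          exact ⟨hnm c hcm, by rw [← h2, hpc]⟩
        · rintro ⟨hum, hpu⟩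
          obtain ⟨c, rfl⟩ := hbij.2 u
          have hcm : c ≠ m' := by
            intro e
            exact hum (by rw [e, hm])
          have hbc : s' b < s' c := by
            have := hp (φ c) hum
            rw [hpu] at this
            rw [← hφ b, ← hφ c]
            exact this
          obtain ⟨_, h2⟩ := hIH c hcm hbc
          refine ⟨c, ⟨hcm, ?_⟩, rfl⟩
          exact hbij.1 (h2.trans hpu)
      have hwsum : ∑ u ∈ Finset.univ.filter (fun u => u ≠ m ∧ p u = φ b), w u
          = ∑ c ∈ Finset.univ.filter (fun c => c ≠ m' ∧ p' c = b), w' c := by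
        rw [← himg, Finset.sum_image (fun x _ y _ e => hbij.1 e)]
        refine Finset.sum_congr rfl ?_
        intro c hc
        rw [Finset.mem_filter] at hc
        have hbc : s' b < s' c := by rw [← hc.2.2]; exact hp' c hc.2.1
        exact ((hIH c hc.2.1 hbc).1).symm
      have hww : w' b = w (φ b) := by
        rw [hrec' b hbm, hrec (φ b) ham, hwsum]
      refine ⟨hww, ?_⟩
      have e1 := hw (φ b) ham
      have e2 := hw' b hbm
      rw [hφ b] at e1
      have e3 : s' (p' b) = s (p (φ b)) := by omega
      apply hs
      rw [hφ, e3]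
  intro b hb
  exact (KEY _ b rfl hb).2


end StatusUnique

/-- Status injective trees are status unique in trees: if `T` is a finite tree whose vertices
have pairwise distinct statuses and `T'` is a finite tree with the same status sequence
(multiset of statuses), then `T'` is isomorphic to `T`. -/
theorem status_injective_tree_status_unique {V V' : Type*} [Fintype V] [Fintype V']
    (T : SimpleGraph V) (T' : SimpleGraph V')
    (hT : T.IsTree) (hT' : T'.IsTree)
    (hinj : Function.Injective T.status)
    (hseq : T'.statusSequence = T.statusSequence) :
    Nonempty (T' ≃g T) := by
  classical
  open StatusUnique in
  have hVne : Nonempty V := hT.isConnected.nonempty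
  have hV'ne : Nonempty V' := hT'.isConnected.nonempty
  have hcard : Fintype.card V' = Fintype.card V := by
    have h := congrArg Multiset.card hseq
    simpa [SimpleGraph.statusSequence] using h
  have hnd : (T'.statusSequence).Nodup := by
    rw [hseq]
    exact Multiset.Nodup.map hinj Finset.univ.nodup
  have hs'inj : Function.Injective T'.status := by
    intro b₁ b₂ he
    refine Multiset.inj_on_of_nodup_map
      (by simpa [SimpleGraph.statusSequence] using hnd) b₁ ?_ b₂ ?_ he <;>
      exact Finset.mem_val.mpr (Finset.mem_univ _)
  have hex : ∀ b : V', ∃! a : V, T.status a = T'.status b := by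
    intro b
    have hb : T'.status b ∈ T.statusSequence := by
      rw [← hseq]
      exact Multiset.mem_map_of_mem _ (Finset.mem_val.mpr (Finset.mem_univ _))
    obtain ⟨a, ha⟩ : ∃ a, T.status a = T'.status b := by
      simpa [SimpleGraph.statusSequence] using hb
    exact ⟨a, ha, fun y hy => hinj (hy.trans ha.symm)⟩
  let φ : V' → V := fun b => Fintype.choose _ (hex b)
  have hφ : ∀ b, T.status (φ b) = T'.status b := fun b => Fintype.choose_spec _ (hex b)
  have hφinj : Function.Injective φ := fun b₁ b₂ e => hs'inj (by rw [← hφ, ← hφ, e])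
  have hφsurj : Function.Surjective φ := by
    intro a
    have ha : T.status a ∈ T'.statusSequence := by
      rw [hseq]
      exact Multiset.mem_map_of_mem _ (Finset.mem_val.mpr (Finset.mem_univ _))
    obtain ⟨b, hb⟩ : ∃ b, T'.status b = T.status a := by
      simpa [SimpleGraph.statusSequence] using ha
    exact ⟨b, hinj ((hφ b).trans hb)⟩
  have hbij : Function.Bijective φ := ⟨hφinj, hφsurj⟩
  obtain ⟨m, -, hmmin⟩ := Finset.exists_min_image Finset.univ T.status
    ⟨Classical.arbitrary V, Finset.mem_univ _⟩
  obtain ⟨m', -, hm'min⟩ := Finset.exists_min_image Finset.univ T'.status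
    ⟨Classical.arbitrary V', Finset.mem_univ _⟩
  have hm : ∀ x, T.status m ≤ T.status x := fun x => hmmin x (Finset.mem_univ x)
  have hm' : ∀ x, T'.status m' ≤ T'.status x := fun x => hm'min x (Finset.mem_univ x)
  have hmm' : φ m' = m := by
    have h1 : T'.status m' ≤ T.status m := by
      obtain ⟨b, hb⟩ := hφsurj m
      calc T'.status m' ≤ T'.status b := hm' b
        _ = T.status (φ b) := (hφ b).symm
        _ = T.status m := by rw [hb]
    have h2 : T.status m ≤ T'.status m' := by
      calc T.status m ≤ T.status (φ m') := hm (φ m')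
        _ = T'.status m' := hφ m'
    exact hinj ((hφ m').trans (le_antisymm h1 h2))
  obtain ⟨p, w, hplt, hw, hrec, hadj⟩ := StatusUnique.tree_data hT hinj hm
  obtain ⟨p', w', hplt', hw', hrec', hadj'⟩ := StatusUnique.tree_data hT' hs'inj hm'
  simp only [hcard] at hw'
  have hco := StatusUnique.reconstruct (Fintype.card V) T.status T'.status hinj φ hφ hbij
    m m' hmm' p p' hplt hplt' w w' hw hw' hrec hrec'
  have hbm : ∀ b : V', b ≠ m' ↔ φ b ≠ m := by
    intro b
    constructor
    · intro h e
      exact h (hφinj (e.trans hmm'.symm))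
    · intro h e
      exact h (by rw [e, hmm'])
  refine ⟨⟨Equiv.ofBijective φ hbij, ?_⟩⟩
  intro a b
  show T.Adj (φ a) (φ b) ↔ T'.Adj a b
  rw [hadj, hadj']
  constructor
  · rintro (⟨h1, h2⟩ | ⟨h1, h2⟩)
    · left
      have ha' : a ≠ m' := (hbm a).mpr h1
      refine ⟨ha', hφinj ?_⟩
      rw [hco a ha', h2]
    · right
      have hb' : b ≠ m' := (hbm b).mpr h1
      refine ⟨hb', hφinj ?_⟩
      rw [hco b hb', h2]
  · rintro (⟨h1, h2⟩ | ⟨h1, h2⟩)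
    · exact Or.inl ⟨(hbm a).mp h1, by rw [← hco a h1, h2]⟩
    · exact Or.inr ⟨(hbm b).mp h1, by rw [← hco b h1, h2]⟩
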